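/- Assume the UB setup. Then d ≤ min{wt(a)^ℓ + 1, wt(h)}, where wt(a) and wt(h) are the Hamming weights of a and h in R_n. -/

import Mathlib

open Polynomial

noncomputable section

/-- `R_n = F_2[x]/(x^n - 1)`. -/
abbrev Rq (n : ℕ) : Type :=
  Polynomial (ZMod 2) ⧸ Ideal.span ({X ^ n - 1} : Set (Polynomial (ZMod 2)))

/-- The canonical projection `F_2[x] → R_n`. -/
abbrev mkq (n : ℕ) : Polynomial (ZMod 2) →+* Rq n :=
  Ideal.Quotient.mk (Ideal.span ({X ^ n - 1} : Set (Polynomial (ZMod 2))))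

/-- The unique polynomial representative of degree `< n` of an element of `R_n`
(obtained by reducing any lift modulo the monic polynomial `x^n - 1`). -/
def rep (n : ℕ) (z : Rq n) : Polynomial (ZMod 2) :=
  Function.surjInv Ideal.Quotient.mk_surjective z %ₘ (X ^ n - 1)

/-- Hamming weight of an element of `R_n`: the number of nonzero coefficients of its
unique representative of degree `< n`. -/
def wtq (n : ℕ) (z : Rq n) : ℕ := (rep n z).support.card

/-- The `Z`-distance of `UB(a, ℓ)` (with `t = 2^ℓ`):
`d_Z = min { wt(u) + wt(v) : (u,v) ∈ ker H_Z \ rs H_X }`, where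
`ker H_Z = {(u,v) : b*·u + a*·v = 0}` and `rs H_X = {(a·s, b·s)}`, `b = a^t`. -/
def dZv (n : ℕ) (a : Polynomial (ZMod 2)) (t : ℕ) : ℕ :=
  sInf {m : ℕ | ∃ w : Rq n × Rq n,
    (mkq n ((a ^ t).reverse) * w.1 + mkq n a.reverse * w.2 = 0) ∧
    (¬ ∃ s : Rq n, w = (mkq n a * s, (mkq n a) ^ t * s)) ∧
    m = wtq n w.1 + wtq n w.2}

/-- The `X`-distance of `UB(a, ℓ)` (with `t = 2^ℓ`):
`d_X = min { wt(u) + wt(v) : (u,v) ∈ ker H_X \ rs H_Z }`, where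
`ker H_X = {(u,v) : a·u + b·v = 0}` and `rs H_Z = {(b*·s, a*·s)}`, `b = a^t`. -/
def dXv (n : ℕ) (a : Polynomial (ZMod 2)) (t : ℕ) : ℕ :=
  sInf {m : ℕ | ∃ w : Rq n × Rq n,
    (mkq n a * w.1 + (mkq n a) ^ t * w.2 = 0) ∧
    (¬ ∃ s : Rq n, w = (mkq n ((a ^ t).reverse) * s, mkq n a.reverse * s)) ∧
    m = wtq n w.1 + wtq n w.2}

namespace Stmt15Aux

variable {n : ℕ}

lemma monic_m (hn : 1 ≤ n) : (X ^ n - 1 : (ZMod 2)[X]).Monic := by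
  simpa using monic_X_pow_sub_C (1 : ZMod 2) (by omega : n ≠ 0)

lemma degree_m (hn : 1 ≤ n) : (X ^ n - 1 : (ZMod 2)[X]).degree = n := by
  simpa using degree_X_pow_sub_C (by omega : 0 < n) (1 : ZMod 2)

lemma natDegree_m : (X ^ n - 1 : (ZMod 2)[X]).natDegree = n := by
  simpa using natDegree_X_pow_sub_C (n := n) (r := (1 : ZMod 2))

lemma modEq (hn : 1 ≤ n) {p q : (ZMod 2)[X]}
    (hd : (X ^ n - 1 : (ZMod 2)[X]) ∣ (p - q)) :
    p %ₘ (X ^ n - 1) = q %ₘ (X ^ n - 1) := by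
  have hp : p = q + (p - q) := by ring
  rw [hp, add_modByMonic, (modByMonic_eq_zero_iff_dvd (monic_m hn)).2 hd, add_zero]

lemma supp_mod_subset (hn : 1 ≤ n) :
    ∀ d (p : (ZMod 2)[X]), p.natDegree ≤ d →
      (p %ₘ (X ^ n - 1)).support ⊆ p.support.image (· % n) := by
  intro d
  induction d using Nat.strong_induction_on with
  | _ d ih =>
    intro p hpd
    by_cases hdeg : p.natDegree < n
    · have hself : p %ₘ (X ^ n - 1) = p := by
        rw [(modByMonic_eq_self_iff (monic_m hn)).2]
        rw [degree_m hn]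
        exact lt_of_le_of_lt degree_le_natDegree (by exact_mod_cast hdeg)
      rw [hself]
      intro i hi
      exact Finset.mem_image.2 ⟨i, hi,
        Nat.mod_eq_of_lt (lt_of_le_of_lt (le_natDegree_of_mem_supp i hi) hdeg)⟩
    · push_neg at hdeg
      have hp0 : p ≠ 0 := by
        intro h0
        rw [h0, natDegree_zero] at hdeg
        omega
      set dd := p.natDegree with hdd
      set c := p.leadingCoeff with hc
      set p' := p.eraseLead + C c * X ^ (dd - n) with hp'
      have hxx : (X : (ZMod 2)[X]) ^ (dd - n) * X ^ n = X ^ dd := by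
        rw [← pow_add]
        congr 1
        omega
      have hsplit : p = p' + C c * X ^ (dd - n) * (X ^ n - 1) := by
        have key := p.eraseLead_add_C_mul_X_pow
        rw [hp']
        linear_combination -key - C c * hxx
      have hmod : p %ₘ (X ^ n - 1) = p' %ₘ (X ^ n - 1) := by
        apply modEq hn
        exact ⟨C c * X ^ (dd - n), by rw [hsplit]; ring⟩
      have hdeg' : p'.natDegree < dd := by
        have h1 := p.eraseLead_natDegree_le
        have h2 := natDegree_C_mul_X_pow_le c (dd - n)
        have h3 := natDegree_add_le p.eraseLead (C c * X ^ (dd - n))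
        have h4 : p'.natDegree = (p.eraseLead + C c * X ^ (dd - n)).natDegree := by
          rw [hp']
        rw [h4]
        rcases max_cases p.eraseLead.natDegree (C c * X ^ (dd - n)).natDegree with
          ⟨hm, _⟩ | ⟨hm, _⟩ <;> rw [hm] at h3 <;> omega
      have hsub := ih p'.natDegree (lt_of_lt_of_le hdeg' hpd) p' le_rfl
      rw [hmod]
      refine hsub.trans ?_
      intro j hj
      obtain ⟨i, hi, hij⟩ := Finset.mem_image.1 hj
      have hi' := support_add hi
      rcases Finset.mem_union.1 hi' with h1 | h1
      · rw [p.eraseLead_support] at h1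
        exact Finset.mem_image.2 ⟨i, Finset.mem_of_mem_erase h1, hij⟩
      · have : i = dd - n := by
          have := support_C_mul_X_pow' (dd - n) c h1
          simpa using this
        subst this
        refine Finset.mem_image.2 ⟨dd, natDegree_mem_support_of_nonzero hp0, ?_⟩
        rw [← hij]
        conv_lhs => rw [show dd = (dd - n) + n by omega]
        rw [Nat.add_mod_right]

lemma card_mod_le (hn : 1 ≤ n) (p : (ZMod 2)[X]) :
    (p %ₘ (X ^ n - 1)).support.card ≤ p.support.card :=
  (Finset.card_le_card (supp_mod_subset hn p.natDegree p le_rfl)).trans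
    Finset.card_image_le

lemma dvd_sub_mod (hn : 1 ≤ n) (p : (ZMod 2)[X]) :
    (X ^ n - 1 : (ZMod 2)[X]) ∣ (p - p %ₘ (X ^ n - 1)) := by
  have := modByMonic_add_div p (X ^ n - 1 : (ZMod 2)[X])
  exact ⟨p /ₘ (X ^ n - 1), by linear_combination -this⟩

lemma wt_mul (hn : 1 ≤ n) (p q : (ZMod 2)[X]) :
    ((p * q) %ₘ (X ^ n - 1)).support.card ≤
      (p %ₘ (X ^ n - 1)).support.card * (q %ₘ (X ^ n - 1)).support.card := by
  have h1 : (p * q) %ₘ (X ^ n - 1) =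
      ((p %ₘ (X ^ n - 1)) * (q %ₘ (X ^ n - 1))) %ₘ (X ^ n - 1) := by
    apply modEq hn
    obtain ⟨u, hu⟩ := dvd_sub_mod hn p
    obtain ⟨v, hv⟩ := dvd_sub_mod hn q
    exact ⟨u * q + (p %ₘ (X ^ n - 1)) * v,
      by linear_combination q * hu + (p %ₘ (X ^ n - 1)) * hv⟩
  rw [h1]
  exact (card_mod_le hn _).trans card_support_mul_le

lemma card_support_sq (q : (ZMod 2)[X]) : (q ^ 2).support.card ≤ q.support.card := by
  have h2 : (q ^ 2 : (ZMod 2)[X]) = expand (ZMod 2) 2 q := by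
    rw [← map_frobenius_expand 2 q, ZMod.frobenius_zmod, map_id]
  rw [h2]
  apply Finset.card_le_card_of_injOn (fun i => i / 2)
  · intro i hi
    rw [Finset.mem_coe, mem_support_iff, coeff_expand (by norm_num : 0 < 2)] at hi
    rw [Finset.mem_coe, mem_support_iff]
    by_cases hdvd : 2 ∣ i
    · simpa [hdvd] using hi
    · simp [hdvd] at hi
  · intro i hi j hj hij
    simp only [Finset.mem_coe, mem_support_iff,
      coeff_expand (by norm_num : 0 < 2)] at hi hj
    have hdi : 2 ∣ i := by by_contra hc; simp [hc] at hi
    have hdj : 2 ∣ j := by by_contra hc; simp [hc] at hj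
    simp only at hij
    omega

lemma wt_sq (hn : 1 ≤ n) (p : (ZMod 2)[X]) :
    ((p ^ 2) %ₘ (X ^ n - 1)).support.card ≤ (p %ₘ (X ^ n - 1)).support.card := by
  have h1 : (p ^ 2) %ₘ (X ^ n - 1) = ((p %ₘ (X ^ n - 1)) ^ 2) %ₘ (X ^ n - 1) := by
    apply modEq hn
    obtain ⟨u, hu⟩ := dvd_sub_mod hn p
    exact ⟨u * (p + p %ₘ (X ^ n - 1)),
      by linear_combination (p + p %ₘ (X ^ n - 1)) * hu⟩
  rw [h1]
  exact (card_mod_le hn _).trans (card_support_sq _)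

lemma wt_pow (hn : 1 ≤ n) (a : (ZMod 2)[X]) :
    ∀ ℓ : ℕ, 1 ≤ ℓ →
      ((a ^ (2 ^ ℓ - 1)) %ₘ (X ^ n - 1)).support.card ≤
        ((a %ₘ (X ^ n - 1)).support.card) ^ ℓ := by
  intro ℓ
  induction ℓ with
  | zero => omega
  | succ k ih =>
    intro _
    by_cases hk : k = 0
    · subst hk
      simp
    · have hk1 : 1 ≤ k := by omega
      have h2k : 1 ≤ 2 ^ k := Nat.one_le_two_pow
      have he : a ^ (2 ^ (k + 1) - 1) = (a ^ (2 ^ k - 1)) ^ 2 * a := by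
        rw [← pow_mul, ← pow_succ]
        congr 1
        have : 2 ^ (k + 1) = 2 * 2 ^ k := by ring
        omega
      rw [he]
      calc ((a ^ (2 ^ k - 1)) ^ 2 * a %ₘ (X ^ n - 1)).support.card
          ≤ ((a ^ (2 ^ k - 1)) ^ 2 %ₘ (X ^ n - 1)).support.card *
            (a %ₘ (X ^ n - 1)).support.card := wt_mul hn _ _
        _ ≤ ((a ^ (2 ^ k - 1)) %ₘ (X ^ n - 1)).support.card *
            (a %ₘ (X ^ n - 1)).support.card :=
            Nat.mul_le_mul_right _ (wt_sq hn _)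
        _ ≤ ((a %ₘ (X ^ n - 1)).support.card) ^ k *
            (a %ₘ (X ^ n - 1)).support.card := Nat.mul_le_mul_right _ (ih hk1)
        _ = ((a %ₘ (X ^ n - 1)).support.card) ^ (k + 1) := (pow_succ _ _).symm

lemma mk_eq_zero_iff (p : (ZMod 2)[X]) :
    mkq n p = 0 ↔ (X ^ n - 1 : (ZMod 2)[X]) ∣ p := by
  rw [Ideal.Quotient.eq_zero_iff_mem, Ideal.mem_span_singleton]

lemma mk_eq_mk_iff (p q : (ZMod 2)[X]) :
    mkq n p = mkq n q ↔ (X ^ n - 1 : (ZMod 2)[X]) ∣ (p - q) := by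
  rw [Ideal.Quotient.mk_eq_mk_iff_sub_mem, Ideal.mem_span_singleton]

lemma rep_mk (hn : 1 ≤ n) (p : (ZMod 2)[X]) :
    rep n (mkq n p) = p %ₘ (X ^ n - 1) := by
  apply modEq hn
  rw [← mk_eq_mk_iff]
  exact Function.surjInv_eq Ideal.Quotient.mk_surjective (mkq n p)

lemma wtq_mk (hn : 1 ≤ n) (p : (ZMod 2)[X]) :
    wtq n (mkq n p) = (p %ₘ (X ^ n - 1)).support.card := by
  rw [wtq, rep_mk hn]

lemma wtq_one (hn : 1 ≤ n) : wtq n (1 : Rq n) = 1 := by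
  have h1 : (1 : Rq n) = mkq n 1 := (map_one _).symm
  rw [h1, wtq_mk hn]
  rw [(modByMonic_eq_self_iff (monic_m hn)).2
    (by rw [degree_m hn, degree_one]; exact_mod_cast WithBot.coe_lt_coe.2 (by omega))]
  rw [← C_1, support_C (one_ne_zero)]
  rfl

lemma wtq_zero (hn : 1 ≤ n) : wtq n (0 : Rq n) = 0 := by
  rw [show (0 : Rq n) = mkq n 0 from (map_zero _).symm, wtq_mk hn,
    zero_modByMonic, support_zero, Finset.card_empty]

lemma not_dvd_small (hn : 1 ≤ n) {g : (ZMod 2)[X]} (hg : g ≠ 0)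
    (hdeg : g.natDegree < n) : ¬ (X ^ n - 1 : (ZMod 2)[X]) ∣ g := by
  intro hdvd
  have := natDegree_le_of_dvd hdvd hg
  rw [natDegree_m] at this
  omega

lemma rev_m (hn : 1 ≤ n) : (X ^ n - 1 : (ZMod 2)[X]).reverse = X ^ n - 1 := by
  have hxn : (X ^ n - 1 : (ZMod 2)[X]) = X ^ n + 1 := by
    rw [CharTwo.sub_eq_add]
  rw [hxn, reverse]
  have hnd : (X ^ n + 1 : (ZMod 2)[X]).natDegree = n := by
    rw [← hxn, natDegree_m]
  rw [hnd, reflect_add]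
  have h1 : reflect n ((X : (ZMod 2)[X]) ^ n) = 1 := by
    rw [reflect_monomial, revAt_le le_rfl, Nat.sub_self, pow_zero]
  have h2 : reflect n (1 : (ZMod 2)[X]) = X ^ n := by
    rw [show (1 : (ZMod 2)[X]) = X ^ 0 by rw [pow_zero], reflect_monomial,
      revAt_le (Nat.zero_le n), Nat.sub_zero]
  rw [h1, h2, add_comm]

end Stmt15Aux
/-- in the UB setup, `d ≤ min{wt(a)^ℓ + 1, wt(h)}`. -/
theorem stmt15 (n : ℕ) (hn : 1 ≤ n) (a h : Polynomial (ZMod 2))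
    (hah : a * h = X ^ n - 1) (hr : 0 < a.natDegree) (ℓ t : ℕ) (hℓ : 1 ≤ ℓ)
    (ht : t = 2 ^ ℓ) :
    min (dXv n a t) (dZv n a t) ≤
      min (wtq n (mkq n a) ^ ℓ + 1) (wtq n (mkq n h)) := by
  have h2t : 2 ≤ t := by
    have : 2 ^ 1 ≤ 2 ^ ℓ := Nat.pow_le_pow_right (by norm_num) hℓ
    omega
  have hm0 : (X ^ n - 1 : (ZMod 2)[X]) ≠ 0 := (Stmt15Aux.monic_m hn).ne_zero
  have ha0 : a ≠ 0 := by
    rintro rfl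
    rw [zero_mul] at hah
    exact hm0 hah.symm
  have hh0 : h ≠ 0 := by
    rintro rfl
    rw [mul_zero] at hah
    exact hm0 hah.symm
  have hdegs : a.natDegree + h.natDegree = n := by
    rw [← natDegree_mul ha0 hh0, hah, Stmt15Aux.natDegree_m]
  have hhn : h.natDegree < n := by omega
  have hrevh0 : h.reverse ≠ 0 := fun hc => hh0 (reverse_eq_zero.1 hc)
  have hrevhn : h.reverse.natDegree < n :=
    lt_of_le_of_lt h.reverse_natDegree_le hhn
  -- `mkq (h.reverse) ≠ 0` and `mkq h ≠ 0`
  have hmkhrev : mkq n h.reverse ≠ 0 := by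
    rw [Ne, Stmt15Aux.mk_eq_zero_iff]
    exact Stmt15Aux.not_dvd_small hn hrevh0 hrevhn
  have hmkh : mkq n h ≠ 0 := by
    rw [Ne, Stmt15Aux.mk_eq_zero_iff]
    exact Stmt15Aux.not_dvd_small hn hh0 hhn
  -- `mkq ((a*h).reverse) = 0`
  have hmk_ahrev : mkq n (a.reverse * h.reverse) = 0 := by
    rw [← reverse_mul_of_domain, hah, Stmt15Aux.rev_m hn, Stmt15Aux.mk_eq_zero_iff]
  -- `a^t = a * a^(t-1)`
  have hat : a ^ t = a * a ^ (t - 1) := by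
    rw [← pow_succ']
    congr 1
    omega
  -- the first codeword `(a^(t-1), 1)`
  have mem1 : wtq n (mkq n (a ^ (t - 1))) + wtq n (1 : Rq n) ∈
      {m : ℕ | ∃ w : Rq n × Rq n,
        (mkq n a * w.1 + (mkq n a) ^ t * w.2 = 0) ∧
        (¬ ∃ s : Rq n, w = (mkq n ((a ^ t).reverse) * s, mkq n a.reverse * s)) ∧
        m = wtq n w.1 + wtq n w.2} := by
    refine ⟨(mkq n (a ^ (t - 1)), 1), ?_, ?_, rfl⟩
    · show mkq n a * mkq n (a ^ (t - 1)) + (mkq n a) ^ t * 1 = 0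
      rw [mul_one, ← map_pow, ← map_mul, ← map_add, ← hat,
        CharTwo.add_self_eq_zero, map_zero]
    · rintro ⟨s, hs⟩
      have hs2 : (1 : Rq n) = mkq n a.reverse * s := congrArg Prod.snd hs
      have : mkq n h.reverse = 0 := by
        have h1 : mkq n h.reverse = mkq n h.reverse * (mkq n a.reverse * s) := by
          rw [← hs2, mul_one]
        rw [h1, ← mul_assoc, ← map_mul, mul_comm (h.reverse), hmk_ahrev, zero_mul]
      exact hmkhrev this
  -- the second codeword `(h, 0)`
  have mem2 : wtq n (mkq n h) + wtq n (0 : Rq n) ∈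
      {m : ℕ | ∃ w : Rq n × Rq n,
        (mkq n a * w.1 + (mkq n a) ^ t * w.2 = 0) ∧
        (¬ ∃ s : Rq n, w = (mkq n ((a ^ t).reverse) * s, mkq n a.reverse * s)) ∧
        m = wtq n w.1 + wtq n w.2} := by
    refine ⟨(mkq n h, 0), ?_, ?_, rfl⟩
    · show mkq n a * mkq n h + (mkq n a) ^ t * 0 = 0
      rw [mul_zero, add_zero, ← map_mul, hah]
      exact (Stmt15Aux.mk_eq_zero_iff _).2 dvd_rfl
    · rintro ⟨s, hs⟩
      have hs1 : mkq n h = mkq n ((a ^ t).reverse) * s := congrArg Prod.fst hs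
      have hs2 : (0 : Rq n) = mkq n a.reverse * s := congrArg Prod.snd hs
      have hre : (a ^ t).reverse = a.reverse * (a ^ (t - 1)).reverse := by
        rw [hat, reverse_mul_of_domain]
      have : mkq n h = 0 := by
        rw [hs1, hre, map_mul, mul_comm (mkq n a.reverse), mul_assoc, ← hs2,
          mul_zero]
      exact hmkh this
  have hdX1 : dXv n a t ≤ wtq n (mkq n (a ^ (t - 1))) + wtq n (1 : Rq n) :=
    Nat.sInf_le mem1
  have hdX2 : dXv n a t ≤ wtq n (mkq n h) + wtq n (0 : Rq n) :=
    Nat.sInf_le mem2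
  have hb1 : wtq n (mkq n (a ^ (t - 1))) ≤ wtq n (mkq n a) ^ ℓ := by
    rw [Stmt15Aux.wtq_mk hn, Stmt15Aux.wtq_mk hn]
    have : t - 1 = 2 ^ ℓ - 1 := by omega
    rw [this]
    exact Stmt15Aux.wt_pow hn a ℓ hℓ
  refine le_trans (min_le_left _ _) (le_min ?_ ?_)
  · refine hdX1.trans ?_
    rw [Stmt15Aux.wtq_one hn]
    omega
  · refine hdX2.trans ?_
    rw [Stmt15Aux.wtq_zero hn]
    omega

end
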